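/- In a dual weak brace S, the socle Soc(S) = {a ∈ S : a + b = a ∘ b and a + b = b + a for all b ∈ S} equals the set {a ∈ S : a · b ∈ E(S) and a + b = b + a for all b ∈ S}, where a · b := -a + a ∘ b - b and E(S) is the set of idempotents. -/
import Mathlib


/-- A weak brace: `(S,+)` and `(S,∘)` are inverse semigroups satisfying
`a ∘ (b + c) = a ∘ b - a + a ∘ c` and `a ∘ a⁻ = -a + a`. -/
class WeakBrace (S : Type*) where
  add : S → S → S
  mul : S → S → S
  neg : S → S
  inv : S → S
  add_assoc : ∀ a b c : S, add (add a b) c = add a (add b c)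
  mul_assoc : ∀ a b c : S, mul (mul a b) c = mul a (mul b c)
  add_reg : ∀ a : S, add (add a (neg a)) a = a
  neg_reg : ∀ a : S, add (add (neg a) a) (neg a) = neg a
  neg_unique : ∀ a x : S, add (add a x) a = a → add (add x a) x = x → x = neg a
  mul_reg : ∀ a : S, mul (mul a (inv a)) a = a
  inv_reg : ∀ a : S, mul (mul (inv a) a) (inv a) = inv a
  inv_unique : ∀ a x : S, mul (mul a x) a = a → mul (mul x a) x = x → x = inv a
  distrib : ∀ a b c : S, mul a (add b c) = add (add (mul a b) (neg a)) (mul a c)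
  link : ∀ a : S, mul a (inv a) = add (neg a) a

/-- A dual weak brace: a weak brace whose multiplicative semigroup is Clifford. -/
class DualWeakBrace (S : Type*) extends WeakBrace S where
  clifford : ∀ a : S, WeakBrace.mul a (WeakBrace.inv a) = WeakBrace.mul (WeakBrace.inv a) a

namespace WeakBrace

variable {S : Type*} [WeakBrace S]

/-- `λ_a(b) = -a + a ∘ b`. -/
def lam (a b : S) : S := add (neg a) (mul a b)

/-- `ρ_b(a) = (-a + a ∘ b)⁻ ∘ a ∘ b`. -/
def rho (b a : S) : S := mul (mul (inv (lam a b)) a) b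

/-- `a · b = -a + a ∘ b - b`. -/
def cdot (a b : S) : S := add (add (neg a) (mul a b)) (neg b)

/-- `a⁰ = a - a`. -/
def sq (a : S) : S := add a (neg a)

/-- Additive idempotent (the sets of idempotents of `+` and `∘` coincide). -/
def IsIdem (e : S) : Prop := add e e = e

/-- `[a,b]₊ = -a - b + a + b`. -/
def brkt (a b : S) : S := add (add (add (neg a) (neg b)) a) b

/-- `I` is a full inverse subsemigroup of `(S,+)`. -/
def IsFullAddSub (I : Set S) : Prop :=
  (∀ e : S, IsIdem e → e ∈ I) ∧ (∀ x ∈ I, ∀ y ∈ I, add x y ∈ I) ∧ (∀ x ∈ I, neg x ∈ I)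

/-- `I` is a normal subsemigroup of `(S,+)`. -/
def IsNormalAdd (I : Set S) : Prop :=
  IsFullAddSub I ∧ ∀ a : S, ∀ x ∈ I, add (add (neg a) x) a ∈ I

/-- `I` is a normal subsemigroup of `(S,∘)`. -/
def IsNormalMul (I : Set S) : Prop :=
  (∀ e : S, IsIdem e → e ∈ I) ∧ (∀ x ∈ I, ∀ y ∈ I, mul x y ∈ I) ∧ (∀ x ∈ I, inv x ∈ I) ∧
    ∀ a : S, ∀ x ∈ I, mul (mul (inv a) x) a ∈ I

/-- `I` is a left ideal of the weak brace `S`. -/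
def IsLeftIdeal (I : Set S) : Prop :=
  IsFullAddSub I ∧ ∀ a : S, ∀ x ∈ I, lam a x ∈ I

/-- `I` is an ideal of the weak brace `S`. -/
def IsIdeal (I : Set S) : Prop :=
  IsNormalAdd I ∧ (∀ a : S, ∀ x ∈ I, lam a x ∈ I) ∧ IsNormalMul I

/-- The socle `Soc(S)`. -/
def Soc (S : Type*) [WeakBrace S] : Set S :=
  {a | ∀ b : S, add a b = mul a b ∧ add a b = add b a}

/-- The annihilator `Ann(S)`. -/
def Ann (S : Type*) [WeakBrace S] : Set S :=
  {a | ∀ b : S, add a b = add b a ∧ add a b = mul a b ∧ mul a b = mul b a}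

/-- The congruence `a ∼_I b ⟺ a⁰ = b⁰ and -a + b ∈ I` associated to an ideal `I`. -/
def simI (I : Set S) (a b : S) : Prop := sq a = sq b ∧ add (neg a) b ∈ I

/-- Membership in the inverse subsemigroup of `(S,+)` generated by a set `X`. -/
inductive genAdd (X : Set S) : S → Prop
  | base : ∀ x ∈ X, genAdd X x
  | add : ∀ a b : S, genAdd X a → genAdd X b → genAdd X (add a b)
  | neg : ∀ a : S, genAdd X a → genAdd X (neg a)

/-- `X · Y`: the additive inverse subsemigroup generated by the elements `x · y`. -/
def cdotSet (X Y : Set S) : Set S :=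
  {s | genAdd {z | ∃ x ∈ X, ∃ y ∈ Y, z = cdot x y} s}

/-- `S^(n)` for `n ≥ 1`: `S^(1) = S`, `S^(n+1) = S^(n) · S`. -/
def Spow (S : Type*) [WeakBrace S] : ℕ → Set S
  | 0 => Set.univ
  | 1 => Set.univ
  | (n+2) => cdotSet (Spow S (n+1)) Set.univ

end WeakBrace

section Lemmas

variable {S : Type*} [WeakBrace S]

local infixl:65 " ⨢ " => WeakBrace.add (S := S)
local infixl:70 " ⨰ " => WeakBrace.mul (S := S)
local prefix:max "∿" => WeakBrace.neg (S := S)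
local postfix:max "ᶽ" => WeakBrace.inv (S := S)

private lemma aa (a b c : S) : a ⨢ b ⨢ c = a ⨢ (b ⨢ c) := WeakBrace.add_assoc a b c
private lemma ma (a b c : S) : a ⨰ b ⨰ c = a ⨰ (b ⨰ c) := WeakBrace.mul_assoc a b c

private lemma ar (a : S) : a ⨢ (∿a ⨢ a) = a := by rw [← aa]; exact WeakBrace.add_reg a
private lemma nr (a : S) : ∿a ⨢ (a ⨢ ∿a) = ∿a := by rw [← aa]; exact WeakBrace.neg_reg a
private lemma mr (a : S) : a ⨰ (aᶽ ⨰ a) = a := by rw [← ma]; exact WeakBrace.mul_reg a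
private lemma ir (a : S) : aᶽ ⨰ (a ⨰ aᶽ) = aᶽ := by rw [← ma]; exact WeakBrace.inv_reg a

private lemma wb_neg_neg (a : S) : ∿(∿a) = a :=
  (WeakBrace.neg_unique (∿a) a (WeakBrace.neg_reg a) (WeakBrace.add_reg a)).symm

private lemma wb_inv_inv (a : S) : (aᶽ)ᶽ = a :=
  (WeakBrace.inv_unique (aᶽ) a (WeakBrace.inv_reg a) (WeakBrace.mul_reg a)).symm

private lemma idem_neg {e : S} (he : e ⨢ e = e) : ∿e = e :=
  (WeakBrace.neg_unique e e (by rw [he, he]) (by rw [he, he])).symm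

private lemma idem_inv {e : S} (he : e ⨰ e = e) : eᶽ = e :=
  (WeakBrace.inv_unique e e (by rw [he, he]) (by rw [he, he])).symm

/-- sum of two idempotents is idempotent -/
private lemma idem_add {e f : S} (he : e ⨢ e = e) (hf : f ⨢ f = f) :
    (e ⨢ f) ⨢ (e ⨢ f) = e ⨢ f := by
  have step1 : f ⨢ (∿(e ⨢ f) ⨢ e) = ∿(e ⨢ f) := by
    apply WeakBrace.neg_unique
    · calc e ⨢ f ⨢ (f ⨢ (∿(e ⨢ f) ⨢ e)) ⨢ (e ⨢ f)
          = e ⨢ ((f ⨢ f) ⨢ (∿(e ⨢ f) ⨢ ((e ⨢ e) ⨢ f))) := by simp only [aa]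
        _ = e ⨢ (f ⨢ (∿(e ⨢ f) ⨢ (e ⨢ f))) := by rw [he, hf]
        _ = (e ⨢ f) ⨢ ∿(e ⨢ f) ⨢ (e ⨢ f) := by simp only [aa]
        _ = e ⨢ f := WeakBrace.add_reg _
    · calc f ⨢ (∿(e ⨢ f) ⨢ e) ⨢ (e ⨢ f) ⨢ (f ⨢ (∿(e ⨢ f) ⨢ e))
          = f ⨢ (∿(e ⨢ f) ⨢ ((e ⨢ e) ⨢ ((f ⨢ f) ⨢ (∿(e ⨢ f) ⨢ e)))) := by simp only [aa]
        _ = f ⨢ (∿(e ⨢ f) ⨢ ((e ⨢ f) ⨢ (∿(e ⨢ f) ⨢ e))) := by rw [he, hf]; simp only [aa]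
        _ = f ⨢ ((∿(e ⨢ f) ⨢ (e ⨢ f) ⨢ ∿(e ⨢ f)) ⨢ e) := by simp only [aa]
        _ = f ⨢ (∿(e ⨢ f) ⨢ e) := by rw [WeakBrace.neg_reg]
  have step2 : ∿(e ⨢ f) ⨢ ∿(e ⨢ f) = ∿(e ⨢ f) := by
    conv_lhs => rw [← step1]
    calc f ⨢ (∿(e ⨢ f) ⨢ e) ⨢ (f ⨢ (∿(e ⨢ f) ⨢ e))
        = f ⨢ ((∿(e ⨢ f) ⨢ (e ⨢ f) ⨢ ∿(e ⨢ f)) ⨢ e) := by simp only [aa]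
      _ = f ⨢ (∿(e ⨢ f) ⨢ e) := by rw [WeakBrace.neg_reg]
      _ = ∿(e ⨢ f) := step1
  have step3 : e ⨢ f = ∿(e ⨢ f) := (wb_neg_neg (e ⨢ f)).symm.trans (idem_neg step2)
  rw [step3]; exact step2

private lemma idem_mul_idem {e f : S} (he : e ⨰ e = e) (hf : f ⨰ f = f) :
    (e ⨰ f) ⨰ (e ⨰ f) = e ⨰ f := by
  have step1 : f ⨰ ((e ⨰ f)ᶽ ⨰ e) = (e ⨰ f)ᶽ := by
    apply WeakBrace.inv_unique
    · calc e ⨰ f ⨰ (f ⨰ ((e ⨰ f)ᶽ ⨰ e)) ⨰ (e ⨰ f)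
          = e ⨰ ((f ⨰ f) ⨰ ((e ⨰ f)ᶽ ⨰ ((e ⨰ e) ⨰ f))) := by simp only [ma]
        _ = e ⨰ (f ⨰ ((e ⨰ f)ᶽ ⨰ (e ⨰ f))) := by rw [he, hf]
        _ = (e ⨰ f) ⨰ (e ⨰ f)ᶽ ⨰ (e ⨰ f) := by simp only [ma]
        _ = e ⨰ f := WeakBrace.mul_reg _
    · calc f ⨰ ((e ⨰ f)ᶽ ⨰ e) ⨰ (e ⨰ f) ⨰ (f ⨰ ((e ⨰ f)ᶽ ⨰ e))
          = f ⨰ ((e ⨰ f)ᶽ ⨰ ((e ⨰ e) ⨰ ((f ⨰ f) ⨰ ((e ⨰ f)ᶽ ⨰ e)))) := by simp only [ma]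
        _ = f ⨰ ((e ⨰ f)ᶽ ⨰ ((e ⨰ f) ⨰ ((e ⨰ f)ᶽ ⨰ e))) := by rw [he, hf]; simp only [ma]
        _ = f ⨰ (((e ⨰ f)ᶽ ⨰ (e ⨰ f) ⨰ (e ⨰ f)ᶽ) ⨰ e) := by simp only [ma]
        _ = f ⨰ ((e ⨰ f)ᶽ ⨰ e) := by rw [WeakBrace.inv_reg]
  have step2 : (e ⨰ f)ᶽ ⨰ (e ⨰ f)ᶽ = (e ⨰ f)ᶽ := by
    conv_lhs => rw [← step1]
    calc f ⨰ ((e ⨰ f)ᶽ ⨰ e) ⨰ (f ⨰ ((e ⨰ f)ᶽ ⨰ e))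
        = f ⨰ (((e ⨰ f)ᶽ ⨰ (e ⨰ f) ⨰ (e ⨰ f)ᶽ) ⨰ e) := by simp only [ma]
      _ = f ⨰ ((e ⨰ f)ᶽ ⨰ e) := by rw [WeakBrace.inv_reg]
      _ = (e ⨰ f)ᶽ := step1
  have step3 : e ⨰ f = (e ⨰ f)ᶽ := (wb_inv_inv (e ⨰ f)).symm.trans (idem_inv step2)
  rw [step3]; exact step2

/-- idempotents commute (additively) -/
private lemma idem_comm {e f : S} (he : e ⨢ e = e) (hf : f ⨢ f = f) :
    e ⨢ f = f ⨢ e := by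
  have hp := idem_add he hf
  have hq := idem_add hf he
  have : f ⨢ e = ∿(e ⨢ f) := by
    apply WeakBrace.neg_unique
    · calc e ⨢ f ⨢ (f ⨢ e) ⨢ (e ⨢ f)
          = e ⨢ ((f ⨢ f) ⨢ ((e ⨢ e) ⨢ f)) := by simp only [aa]
        _ = (e ⨢ f) ⨢ (e ⨢ f) := by rw [he, hf]; simp only [aa]
        _ = e ⨢ f := hp
    · calc f ⨢ e ⨢ (e ⨢ f) ⨢ (f ⨢ e)
          = f ⨢ ((e ⨢ e) ⨢ ((f ⨢ f) ⨢ e)) := by simp only [aa]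
        _ = (f ⨢ e) ⨢ (f ⨢ e) := by rw [he, hf]; simp only [aa]
        _ = f ⨢ e := hq
  rw [this, idem_neg hp]

private lemma idem_mul_comm {e f : S} (he : e ⨰ e = e) (hf : f ⨰ f = f) :
    e ⨰ f = f ⨰ e := by
  have hp := idem_mul_idem he hf
  have hq := idem_mul_idem hf he
  have : f ⨰ e = (e ⨰ f)ᶽ := by
    apply WeakBrace.inv_unique
    · calc e ⨰ f ⨰ (f ⨰ e) ⨰ (e ⨰ f)
          = e ⨰ ((f ⨰ f) ⨰ ((e ⨰ e) ⨰ f)) := by simp only [ma]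
        _ = (e ⨰ f) ⨰ (e ⨰ f) := by rw [he, hf]; simp only [ma]
        _ = e ⨰ f := hp
    · calc f ⨰ e ⨰ (e ⨰ f) ⨰ (f ⨰ e)
          = f ⨰ ((e ⨰ e) ⨰ ((f ⨰ f) ⨰ e)) := by simp only [ma]
        _ = (f ⨰ e) ⨰ (f ⨰ e) := by rw [he, hf]; simp only [ma]
        _ = f ⨰ e := hq
  rw [this, idem_inv hp]

private lemma sq_idem (a : S) : (a ⨢ ∿a) ⨢ (a ⨢ ∿a) = a ⨢ ∿a := by
  calc a ⨢ ∿a ⨢ (a ⨢ ∿a) = a ⨢ (∿a ⨢ a ⨢ ∿a) := by simp only [aa]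
    _ = a ⨢ ∿a := by rw [WeakBrace.neg_reg]

private lemma osq_idem (a : S) : (∿a ⨢ a) ⨢ (∿a ⨢ a) = ∿a ⨢ a := by
  calc ∿a ⨢ a ⨢ (∿a ⨢ a) = ∿a ⨢ (a ⨢ ∿a ⨢ a) := by simp only [aa]
    _ = ∿a ⨢ a := by rw [WeakBrace.add_reg]

private lemma msq_idem (a : S) : (a ⨰ aᶽ) ⨰ (a ⨰ aᶽ) = a ⨰ aᶽ := by
  calc a ⨰ aᶽ ⨰ (a ⨰ aᶽ) = a ⨰ (aᶽ ⨰ a ⨰ aᶽ) := by simp only [ma]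
    _ = a ⨰ aᶽ := by rw [WeakBrace.inv_reg]

private lemma wb_neg_add (a b : S) : ∿(a ⨢ b) = ∿b ⨢ ∿a := by
  symm; apply WeakBrace.neg_unique
  · calc a ⨢ b ⨢ (∿b ⨢ ∿a) ⨢ (a ⨢ b)
        = a ⨢ ((b ⨢ ∿b) ⨢ (∿a ⨢ a)) ⨢ b := by simp only [aa]
      _ = a ⨢ ((∿a ⨢ a) ⨢ (b ⨢ ∿b)) ⨢ b := by rw [idem_comm (sq_idem b) (osq_idem a)]
      _ = (a ⨢ ∿a ⨢ a) ⨢ (b ⨢ ∿b ⨢ b) := by simp only [aa]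
      _ = a ⨢ b := by rw [WeakBrace.add_reg, WeakBrace.add_reg]
  · calc ∿b ⨢ ∿a ⨢ (a ⨢ b) ⨢ (∿b ⨢ ∿a)
        = ∿b ⨢ ((∿a ⨢ a) ⨢ (b ⨢ ∿b)) ⨢ ∿a := by simp only [aa]
      _ = ∿b ⨢ ((b ⨢ ∿b) ⨢ (∿a ⨢ a)) ⨢ ∿a := by rw [idem_comm (osq_idem a) (sq_idem b)]
      _ = (∿b ⨢ b ⨢ ∿b) ⨢ (∿a ⨢ a ⨢ ∿a) := by simp only [aa]
      _ = ∿b ⨢ ∿a := by rw [WeakBrace.neg_reg, WeakBrace.neg_reg]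

private lemma msq_idem' (a : S) : (aᶽ ⨰ a) ⨰ (aᶽ ⨰ a) = aᶽ ⨰ a := by
  calc aᶽ ⨰ a ⨰ (aᶽ ⨰ a) = aᶽ ⨰ (a ⨰ aᶽ ⨰ a) := by simp only [ma]
    _ = aᶽ ⨰ a := by rw [WeakBrace.mul_reg]

private lemma wb_inv_mul (a b : S) : (a ⨰ b)ᶽ = bᶽ ⨰ aᶽ := by
  symm; apply WeakBrace.inv_unique
  · calc a ⨰ b ⨰ (bᶽ ⨰ aᶽ) ⨰ (a ⨰ b)
        = a ⨰ ((b ⨰ bᶽ) ⨰ (aᶽ ⨰ a)) ⨰ b := by simp only [ma]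
      _ = a ⨰ ((aᶽ ⨰ a) ⨰ (b ⨰ bᶽ)) ⨰ b := by rw [idem_mul_comm (msq_idem b) (msq_idem' a)]
      _ = (a ⨰ aᶽ ⨰ a) ⨰ (b ⨰ bᶽ ⨰ b) := by simp only [ma]
      _ = a ⨰ b := by rw [WeakBrace.mul_reg, WeakBrace.mul_reg]
  · calc bᶽ ⨰ aᶽ ⨰ (a ⨰ b) ⨰ (bᶽ ⨰ aᶽ)
        = bᶽ ⨰ ((aᶽ ⨰ a) ⨰ (b ⨰ bᶽ)) ⨰ aᶽ := by simp only [ma]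
      _ = bᶽ ⨰ ((b ⨰ bᶽ) ⨰ (aᶽ ⨰ a)) ⨰ aᶽ := by rw [idem_mul_comm (msq_idem' a) (msq_idem b)]
      _ = (bᶽ ⨰ b ⨰ bᶽ) ⨰ (aᶽ ⨰ a ⨰ aᶽ) := by simp only [ma]
      _ = bᶽ ⨰ aᶽ := by rw [WeakBrace.inv_reg, WeakBrace.inv_reg]

end Lemmas


section Lemmas2

variable {S : Type*} [WeakBrace S]

local infixl:65 " ⨢ " => WeakBrace.add (S := S)
local infixl:70 " ⨰ " => WeakBrace.mul (S := S)
local prefix:max "∿" => WeakBrace.neg (S := S)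
local postfix:max "ᶽ" => WeakBrace.inv (S := S)

private lemma mul_idem_to_add {e : S} (he : e ⨰ e = e) : e ⨢ e = e := by
  have h1 : e = ∿e ⨢ e := by
    have hl := WeakBrace.link e
    rw [idem_inv he, he] at hl
    exact hl
  calc e ⨢ e = (∿e ⨢ e) ⨢ (∿e ⨢ e) := by rw [← h1]
    _ = ∿e ⨢ (e ⨢ (∿e ⨢ e)) := aa _ _ _
    _ = ∿e ⨢ e := by rw [ar]
    _ = e := h1.symm

private lemma add_idem_to_mul {e : S} (he : e ⨢ e = e) : e ⨰ e = e := by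
  have hl := WeakBrace.link e
  rw [idem_neg he, he] at hl
  have h2 := WeakBrace.mul_reg e
  rw [hl] at h2
  exact h2

private lemma central_neg {a : S} (h : ∀ x : S, a ⨢ x = x ⨢ a) :
    ∀ x : S, ∿a ⨢ x = x ⨢ ∿a := by
  intro x
  have h2 := congrArg (WeakBrace.neg (S := S)) (h (∿x))
  rw [wb_neg_add, wb_neg_add, wb_neg_neg] at h2
  exact h2.symm

private lemma antisym {e f x y : S} (he : e ⨢ e = e) (hf : f ⨢ f = f)
    (hx : x = e ⨢ y) (hy : y = f ⨢ x) : x = y := by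
  have hy' : y = f ⨢ (e ⨢ y) := by rw [← hx]; exact hy
  have key : e ⨢ y = y := by
    calc e ⨢ y = e ⨢ (f ⨢ (e ⨢ y)) := by conv_lhs => rw [hy']
      _ = ((e ⨢ f) ⨢ e) ⨢ y := by rw [← aa e f (e ⨢ y), ← aa (e ⨢ f) e y]
      _ = ((f ⨢ e) ⨢ e) ⨢ y := by rw [idem_comm he hf]
      _ = (f ⨢ (e ⨢ e)) ⨢ y := by rw [aa f e e]
      _ = (f ⨢ e) ⨢ y := by rw [he]
      _ = f ⨢ (e ⨢ y) := aa _ _ _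
      _ = y := hy'.symm
  rw [hx, key]

/-- C0 : for additive idempotents, `e ∘ f = e + f`. -/
private lemma idem_mul_add {e f : S} (he : e ⨢ e = e) (hf : f ⨢ f = f) :
    e ⨰ f = e ⨢ f := by
  have hme := add_idem_to_mul he
  have hmf := add_idem_to_mul hf
  have hne := idem_neg he
  have hnf := idem_neg hf
  have hp : (e ⨰ f) ⨰ (e ⨰ f) = e ⨰ f := idem_mul_idem hme hmf
  have hpa : (e ⨰ f) ⨢ (e ⨰ f) = e ⨰ f := mul_idem_to_add hp
  have hi : (e ⨰ f) ⨢ e = e ⨰ f := by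
    have hd := WeakBrace.distrib e f f
    rw [hf, hne] at hd
    calc (e ⨰ f) ⨢ e
        = ((e ⨰ f) ⨢ (e ⨰ f)) ⨢ e := by rw [hpa]
      _ = (e ⨰ f) ⨢ ((e ⨰ f) ⨢ e) := aa _ _ _
      _ = (e ⨰ f) ⨢ (e ⨢ (e ⨰ f)) := by rw [← idem_comm he hpa]
      _ = ((e ⨰ f) ⨢ e) ⨢ (e ⨰ f) := (aa _ _ _).symm
      _ = e ⨰ f := hd.symm
  have hj : (e ⨰ f) ⨢ f = e ⨰ f := by
    have hd := WeakBrace.distrib f e e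
    rw [he, hnf, idem_mul_comm hmf hme] at hd
    calc (e ⨰ f) ⨢ f
        = ((e ⨰ f) ⨢ (e ⨰ f)) ⨢ f := by rw [hpa]
      _ = (e ⨰ f) ⨢ ((e ⨰ f) ⨢ f) := aa _ _ _
      _ = (e ⨰ f) ⨢ (f ⨢ (e ⨰ f)) := by rw [← idem_comm hf hpa]
      _ = ((e ⨰ f) ⨢ f) ⨢ (e ⨰ f) := (aa _ _ _).symm
      _ = e ⨰ f := hd.symm
  have hpq : (e ⨰ f) ⨢ (e ⨢ f) = e ⨰ f := by
    rw [← aa (e ⨰ f) e f, hi, hj]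
  have hqa : (e ⨢ f) ⨢ (e ⨢ f) = e ⨢ f := idem_add he hf
  have hqm : (e ⨢ f) ⨰ (e ⨢ f) = e ⨢ f := add_idem_to_mul hqa
  have hd1 : e ⨰ (e ⨢ f) = e ⨢ (e ⨰ f) := by
    have hd := WeakBrace.distrib e e f
    rw [hme, hne, he] at hd
    exact hd
  have hd2 : f ⨰ (e ⨢ f) = (e ⨰ f) ⨢ f := by
    have hd := WeakBrace.distrib f e f
    rw [hmf, hnf, idem_mul_comm hmf hme] at hd
    rw [aa (e ⨰ f) f f, hf] at hd
    exact hd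
  have hq : e ⨢ f = e ⨢ (e ⨰ f) := by
    have hd := WeakBrace.distrib (e ⨢ f) e f
    rw [idem_neg hqa, hqm, idem_mul_comm hqm hme, idem_mul_comm hqm hmf] at hd
    rw [hd1, hd2, hj] at hd
    calc e ⨢ f = ((e ⨢ (e ⨰ f)) ⨢ (e ⨢ f)) ⨢ (e ⨰ f) := hd
      _ = (e ⨢ ((e ⨰ f) ⨢ (e ⨢ f))) ⨢ (e ⨰ f) := by rw [aa e (e ⨰ f) (e ⨢ f)]
      _ = (e ⨢ (e ⨰ f)) ⨢ (e ⨰ f) := by rw [hpq]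
      _ = e ⨢ ((e ⨰ f) ⨢ (e ⨰ f)) := aa _ _ _
      _ = e ⨢ (e ⨰ f) := by rw [hpa]
  have hqp2 : (e ⨢ f) ⨢ (e ⨰ f) = e ⨢ f := by
    rw [hq, aa e (e ⨰ f) (e ⨰ f), hpa]
  calc e ⨰ f = (e ⨰ f) ⨢ (e ⨢ f) := hpq.symm
    _ = (e ⨢ f) ⨢ (e ⨰ f) := idem_comm hpa hqa
    _ = e ⨢ f := hqp2

end Lemmas2

section Lemmas3

variable {S : Type*} [DualWeakBrace S]

local infixl:65 " ⨢ " => WeakBrace.add (S := S)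
local infixl:70 " ⨰ " => WeakBrace.mul (S := S)
local prefix:max "∿" => WeakBrace.neg (S := S)
local postfix:max "ᶽ" => WeakBrace.inv (S := S)

private lemma clifford_central {e : S} (he : e ⨰ e = e) (a : S) : e ⨰ a = a ⨰ e := by
  have hinv : eᶽ = e := idem_inv he
  have h1 : e ⨰ (a ⨰ aᶽ) = (a ⨰ aᶽ) ⨰ e := idem_mul_comm he (msq_idem a)
  have hcl := DualWeakBrace.clifford (e ⨰ a)
  rw [wb_inv_mul, hinv] at hcl
  -- hcl : (e ⨰ a) ⨰ (aᶽ ⨰ e) = (aᶽ ⨰ e) ⨰ (e ⨰ a)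
  have h2 : aᶽ ⨰ (a ⨰ e) = aᶽ ⨰ (e ⨰ a) := by
    calc aᶽ ⨰ (a ⨰ e)
        = (aᶽ ⨰ a) ⨰ e := (ma _ _ _).symm
      _ = (a ⨰ aᶽ) ⨰ e := by rw [← DualWeakBrace.clifford a]
      _ = ((a ⨰ aᶽ) ⨰ e) ⨰ e := by
            conv_lhs => rw [← he]
            rw [ma (a ⨰ aᶽ) e e]
      _ = (e ⨰ (a ⨰ aᶽ)) ⨰ e := by rw [h1]
      _ = (e ⨰ a) ⨰ (aᶽ ⨰ e) := by rw [← ma e a aᶽ, ma (e ⨰ a) aᶽ e]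
      _ = (aᶽ ⨰ e) ⨰ (e ⨰ a) := hcl
      _ = aᶽ ⨰ ((e ⨰ e) ⨰ a) := by rw [ma aᶽ e (e ⨰ a), ← ma e e a]
      _ = aᶽ ⨰ (e ⨰ a) := by rw [he]
  calc e ⨰ a = e ⨰ ((a ⨰ aᶽ) ⨰ a) := by rw [WeakBrace.mul_reg]
    _ = (e ⨰ (a ⨰ aᶽ)) ⨰ a := (ma _ _ _).symm
    _ = ((a ⨰ aᶽ) ⨰ e) ⨰ a := by rw [h1]
    _ = a ⨰ (aᶽ ⨰ (e ⨰ a)) := by rw [ma (a ⨰ aᶽ) e a, ma a aᶽ (e ⨰ a)]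
    _ = a ⨰ (aᶽ ⨰ (a ⨰ e)) := by rw [← h2]
    _ = ((a ⨰ aᶽ) ⨰ a) ⨰ e := by rw [← ma a aᶽ (a ⨰ e), ← ma (a ⨰ aᶽ) a e]
    _ = a ⨰ e := by rw [WeakBrace.mul_reg]

private lemma circ_mul (a b : S) :
    ∿(a ⨰ b) ⨢ (a ⨰ b) = (∿a ⨢ a) ⨢ (∿b ⨢ b) := by
  have h1 : (b ⨰ bᶽ) ⨰ aᶽ = aᶽ ⨰ (b ⨰ bᶽ) := clifford_central (msq_idem b) aᶽ
  calc ∿(a ⨰ b) ⨢ (a ⨰ b)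
      = (a ⨰ b) ⨰ (a ⨰ b)ᶽ := (WeakBrace.link (a ⨰ b)).symm
    _ = (a ⨰ b) ⨰ (bᶽ ⨰ aᶽ) := by rw [wb_inv_mul]
    _ = a ⨰ ((b ⨰ bᶽ) ⨰ aᶽ) := by rw [ma a b (bᶽ ⨰ aᶽ), ← ma b bᶽ aᶽ]
    _ = a ⨰ (aᶽ ⨰ (b ⨰ bᶽ)) := by rw [h1]
    _ = (a ⨰ aᶽ) ⨰ (b ⨰ bᶽ) := (ma _ _ _).symm
    _ = (∿a ⨢ a) ⨰ (∿b ⨢ b) := by rw [WeakBrace.link a, WeakBrace.link b]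
    _ = (∿a ⨢ a) ⨢ (∿b ⨢ b) := idem_mul_add (osq_idem a) (osq_idem b)

private lemma main_forward {a : S}
    (h : ∀ b : S, a ⨢ b = a ⨰ b ∧ a ⨢ b = b ⨢ a) (b : S) :
    WeakBrace.IsIdem (WeakBrace.cdot a b) ∧ a ⨢ b = b ⨢ a := by
  refine ⟨?_, (h b).2⟩
  show ((∿a ⨢ (a ⨰ b)) ⨢ ∿b) ⨢ ((∿a ⨢ (a ⨰ b)) ⨢ ∿b) = (∿a ⨢ (a ⨰ b)) ⨢ ∿b
  rw [← (h b).1]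
  have key : (∿a ⨢ (a ⨢ b)) ⨢ ∿b = (∿a ⨢ a) ⨢ (b ⨢ ∿b) := by
    rw [← aa ∿a a b, aa (∿a ⨢ a) b ∿b]
  rw [key]
  exact idem_add (osq_idem a) (sq_idem b)

private lemma main_backward {a : S}
    (h : ∀ b : S, WeakBrace.IsIdem (WeakBrace.cdot a b) ∧ a ⨢ b = b ⨢ a) (b : S) :
    a ⨢ b = a ⨰ b ∧ a ⨢ b = b ⨢ a := by
  refine ⟨?_, (h b).2⟩
  have cen : ∀ x : S, a ⨢ x = x ⨢ a := fun x => (h x).2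
  have cenN : ∀ x : S, ∿a ⨢ x = x ⨢ ∿a := central_neg cen
  have hoa : (∿a ⨢ a) ⨢ (∿a ⨢ a) = ∿a ⨢ a := osq_idem a
  have hob : (∿b ⨢ b) ⨢ (∿b ⨢ b) = ∿b ⨢ b := osq_idem b
  have hcirc : ∿(a ⨰ b) ⨢ (a ⨰ b) = (∿a ⨢ a) ⨢ (∿b ⨢ b) := circ_mul a b
  have hcomm : (∿a ⨢ a) ⨢ (∿b ⨢ b) = (∿b ⨢ b) ⨢ (∿a ⨢ a) := idem_comm hoa hob
  have cenoa : ∀ x : S, (∿a ⨢ a) ⨢ x = x ⨢ (∿a ⨢ a) := by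
    intro x
    calc (∿a ⨢ a) ⨢ x = ∿a ⨢ (a ⨢ x) := aa _ _ _
      _ = ∿a ⨢ (x ⨢ a) := by rw [cen x]
      _ = (∿a ⨢ x) ⨢ a := (aa _ _ _).symm
      _ = (x ⨢ ∿a) ⨢ a := by rw [cenN x]
      _ = x ⨢ (∿a ⨢ a) := aa _ _ _
  have oa_a : (∿a ⨢ a) ⨢ a = a := by rw [cenoa a]; exact ar a
  have hE : ((∿a ⨢ (a ⨰ b)) ⨢ ∿b) ⨢ ((∿a ⨢ (a ⨰ b)) ⨢ ∿b) = (∿a ⨢ (a ⨰ b)) ⨢ ∿b :=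
    (h b).1
  have hBt : (a ⨰ b) ⨢ (∿b ⨢ b) = a ⨰ b := by
    calc (a ⨰ b) ⨢ (∿b ⨢ b)
        = ((a ⨰ b) ⨢ (∿(a ⨰ b) ⨢ (a ⨰ b))) ⨢ (∿b ⨢ b) := by rw [ar (a ⨰ b)]
      _ = (a ⨰ b) ⨢ (((∿a ⨢ a) ⨢ (∿b ⨢ b)) ⨢ (∿b ⨢ b)) := by
            rw [hcirc, aa (a ⨰ b) ((∿a ⨢ a) ⨢ (∿b ⨢ b)) (∿b ⨢ b)]
      _ = (a ⨰ b) ⨢ ((∿a ⨢ a) ⨢ ((∿b ⨢ b) ⨢ (∿b ⨢ b))) := by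
            rw [aa (∿a ⨢ a) (∿b ⨢ b) (∿b ⨢ b)]
      _ = (a ⨰ b) ⨢ ((∿a ⨢ a) ⨢ (∿b ⨢ b)) := by rw [hob]
      _ = (a ⨰ b) ⨢ (∿(a ⨰ b) ⨢ (a ⨰ b)) := by rw [hcirc]
      _ = a ⨰ b := ar _
  have hAt : (∿a ⨢ a) ⨢ (a ⨰ b) = a ⨰ b := by
    calc (∿a ⨢ a) ⨢ (a ⨰ b) = (a ⨰ b) ⨢ (∿a ⨢ a) := cenoa _
      _ = ((a ⨰ b) ⨢ (∿(a ⨰ b) ⨢ (a ⨰ b))) ⨢ (∿a ⨢ a) := by rw [ar (a ⨰ b)]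
      _ = (a ⨰ b) ⨢ (((∿a ⨢ a) ⨢ (∿b ⨢ b)) ⨢ (∿a ⨢ a)) := by
            rw [hcirc, aa (a ⨰ b) ((∿a ⨢ a) ⨢ (∿b ⨢ b)) (∿a ⨢ a)]
      _ = (a ⨰ b) ⨢ (((∿b ⨢ b) ⨢ (∿a ⨢ a)) ⨢ (∿a ⨢ a)) := by rw [hcomm]
      _ = (a ⨰ b) ⨢ ((∿b ⨢ b) ⨢ ((∿a ⨢ a) ⨢ (∿a ⨢ a))) := by
            rw [aa (∿b ⨢ b) (∿a ⨢ a) (∿a ⨢ a)]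
      _ = (a ⨰ b) ⨢ ((∿b ⨢ b) ⨢ (∿a ⨢ a)) := by rw [hoa]
      _ = (a ⨰ b) ⨢ ((∿a ⨢ a) ⨢ (∿b ⨢ b)) := by rw [← hcomm]
      _ = (a ⨰ b) ⨢ (∿(a ⨰ b) ⨢ (a ⨰ b)) := by rw [hcirc]
      _ = a ⨰ b := ar _
  have h1 : ((∿a ⨢ (a ⨰ b)) ⨢ ∿b) ⨢ (a ⨢ b) = a ⨰ b := by
    calc ((∿a ⨢ (a ⨰ b)) ⨢ ∿b) ⨢ (a ⨢ b)
        = (((∿a ⨢ (a ⨰ b)) ⨢ ∿b) ⨢ a) ⨢ b := (aa _ _ _).symm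
      _ = (a ⨢ ((∿a ⨢ (a ⨰ b)) ⨢ ∿b)) ⨢ b := by rw [← cen ((∿a ⨢ (a ⨰ b)) ⨢ ∿b)]
      _ = a ⨢ (((∿a ⨢ (a ⨰ b)) ⨢ ∿b) ⨢ b) := aa _ _ _
      _ = a ⨢ ((∿a ⨢ (a ⨰ b)) ⨢ (∿b ⨢ b)) := by rw [aa (∿a ⨢ (a ⨰ b)) ∿b b]
      _ = a ⨢ (∿a ⨢ ((a ⨰ b) ⨢ (∿b ⨢ b))) := by rw [aa ∿a (a ⨰ b) (∿b ⨢ b)]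
      _ = a ⨢ (∿a ⨢ (a ⨰ b)) := by rw [hBt]
      _ = (a ⨢ ∿a) ⨢ (a ⨰ b) := (aa _ _ _).symm
      _ = (∿a ⨢ a) ⨢ (a ⨰ b) := by rw [cen ∿a]
      _ = a ⨰ b := hAt
  have hnE : ∿((∿a ⨢ (a ⨰ b)) ⨢ ∿b) = (∿a ⨢ (a ⨰ b)) ⨢ ∿b := idem_neg hE
  have hEalt : (∿a ⨢ (a ⨰ b)) ⨢ ∿b = b ⨢ (∿(a ⨰ b) ⨢ a) := by
    conv_lhs => rw [← hnE]
    rw [wb_neg_add (∿a ⨢ (a ⨰ b)) ∿b, wb_neg_add ∿a (a ⨰ b), wb_neg_neg, wb_neg_neg]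
  have h2 : ((∿a ⨢ (a ⨰ b)) ⨢ ∿b) ⨢ (a ⨰ b) = a ⨢ b := by
    calc ((∿a ⨢ (a ⨰ b)) ⨢ ∿b) ⨢ (a ⨰ b)
        = (b ⨢ (∿(a ⨰ b) ⨢ a)) ⨢ (a ⨰ b) := by rw [hEalt]
      _ = b ⨢ (∿(a ⨰ b) ⨢ (a ⨢ (a ⨰ b))) := by
            rw [aa b (∿(a ⨰ b) ⨢ a) (a ⨰ b), aa ∿(a ⨰ b) a (a ⨰ b)]
      _ = b ⨢ (∿(a ⨰ b) ⨢ ((a ⨰ b) ⨢ a)) := by rw [cen (a ⨰ b)]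
      _ = b ⨢ ((∿(a ⨰ b) ⨢ (a ⨰ b)) ⨢ a) := by rw [← aa ∿(a ⨰ b) (a ⨰ b) a]
      _ = b ⨢ (((∿a ⨢ a) ⨢ (∿b ⨢ b)) ⨢ a) := by rw [hcirc]
      _ = b ⨢ (((∿b ⨢ b) ⨢ (∿a ⨢ a)) ⨢ a) := by rw [hcomm]
      _ = b ⨢ ((∿b ⨢ b) ⨢ ((∿a ⨢ a) ⨢ a)) := by rw [aa (∿b ⨢ b) (∿a ⨢ a) a]
      _ = b ⨢ ((∿b ⨢ b) ⨢ a) := by rw [oa_a]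
      _ = (b ⨢ (∿b ⨢ b)) ⨢ a := (aa _ _ _).symm
      _ = b ⨢ a := by rw [ar b]
      _ = a ⨢ b := (cen b).symm
  exact (antisym hE hE h1.symm h2.symm).symm

end Lemmas3


open WeakBrace
theorem stmt15 {S : Type*} [DualWeakBrace S] :
    Soc S = {a : S | ∀ b : S, IsIdem (cdot a b) ∧ add a b = add b a} := by
  ext a
  simp only [Soc, Set.mem_setOf_eq]
  exact ⟨fun ha b => main_forward ha b, fun ha b => main_backward ha b⟩
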